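/- arXiv:2304.05289 — 2 statements merged into one kernel-verified Lean document; each statement's English description precedes it below -/
import Mathlib

section
/- There exists $T_0 \in \mathbb{N}$ with the following property. Let $l, \sigma > 0$ with $l/\sigma \geq T_0$ and let $(P_j)_{j \geq 1}$ be a Caccioppoli partition of the cuboid $S^l_\sigma(x_0) := x_0 + (-l,l) \times (-\sigma/2, \sigma/2)^{d-1}$ such that $\mathcal{H}^{d-1}(\bigcup_{j \geq 1} \partial^* P_j \cap S^l_\sigma(x_0)) < \sigma^{d-1}$ and $\mathcal{L}^d(P_1) \geq \mathcal{L}^d(P_j)$ for all $j \geq 2$. Then $\mathcal{L}^d(S^l_\sigma(x_0) \setminus P_1) \leq C_{\rm iso}\, \sigma\, \mathcal{H}^{d-1}(\partial^* P_1 \cap S^l_\sigma(x_0))$ and $\mathcal{L}^d(P_1) > \tfrac{1}{2} \mathcal{L}^d(S^l_\sigma(x_0))$. -/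
open MeasureTheory Metric Filter Set
open scoped ENNReal Topology

noncomputable section

/-- `P` has density `t` at `x` (with respect to Lebesgue measure). -/
def hasDensity {d : ℕ} (P : Set (EuclideanSpace ℝ (Fin d))) (x : EuclideanSpace ℝ (Fin d))
    (t : ℝ≥0∞) : Prop :=
  Tendsto (fun r : ℝ => volume (P ∩ Metric.ball x r) / volume (Metric.ball x r)) (𝓝[>] 0) (𝓝 t)

/-- The essential (measure-theoretic) boundary of a set. -/
def essentialBoundary {d : ℕ} (P : Set (EuclideanSpace ℝ (Fin d))) :
    Set (EuclideanSpace ℝ (Fin d)) :=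
  {x | ¬ hasDensity P x 0 ∧ ¬ hasDensity P x 1}

/-- The long cuboid `S^l_σ(x₀) = x₀ + (-l,l) × (-σ/2,σ/2)^{d-1}`. -/
def longCuboid {d : ℕ} (l σ : ℝ) (x₀ : EuclideanSpace ℝ (Fin (d + 1))) :
    Set (EuclideanSpace ℝ (Fin (d + 1))) :=
  {x | |x 0 - x₀ 0| < l ∧ ∀ i : Fin (d + 1), i ≠ 0 → |x i - x₀ i| < σ / 2}

/-- A Caccioppoli partition of an open set `U`: countably many sets of finite perimeter,
pairwise disjoint up to null sets, covering `U` up to a null set, with finite total perimeter. -/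
def IsCaccioppoliPartition {d : ℕ} (U : Set (EuclideanSpace ℝ (Fin (d + 1))))
    (P : ℕ → Set (EuclideanSpace ℝ (Fin (d + 1)))) : Prop :=
  (∀ j, P j ⊆ U) ∧
  (Pairwise fun i j => volume (P i ∩ P j) = 0) ∧
  volume (U \ ⋃ j, P j) = 0 ∧
  (∑' j, μH[(d : ℝ)] (essentialBoundary (P j) ∩ U)) < ⊤

lemma hasDensity_union_one {d : ℕ} {A B : Set (EuclideanSpace ℝ (Fin d))}
    {x : EuclideanSpace ℝ (Fin d)} (hA : hasDensity A x 1) : hasDensity (A ∪ B) x 1 := by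
  refine tendsto_of_tendsto_of_tendsto_of_le_of_le hA tendsto_const_nhds
    (fun r => ?_) (fun r => ?_)
  · exact ENNReal.div_le_div_right
      (measure_mono (inter_subset_inter_left _ subset_union_left)) _
  · exact (ENNReal.div_le_div_right (measure_mono inter_subset_right) _).trans
      ENNReal.div_self_le_one

lemma hasDensity_union_zero {d : ℕ} {A B : Set (EuclideanSpace ℝ (Fin d))}
    {x : EuclideanSpace ℝ (Fin d)} (hA : hasDensity A x 0) (hB : hasDensity B x 0) :
    hasDensity (A ∪ B) x 0 := by
  have h := hA.add hB
  rw [add_zero] at h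
  refine tendsto_of_tendsto_of_tendsto_of_le_of_le tendsto_const_nhds h
    (fun r => zero_le) (fun r => ?_)
  calc volume ((A ∪ B) ∩ ball x r) / volume (ball x r)
      ≤ (volume (A ∩ ball x r) + volume (B ∩ ball x r)) / volume (ball x r) := by
        refine ENNReal.div_le_div_right ?_ _
        rw [union_inter_distrib_right]
        exact measure_union_le _ _
    _ = _ := ENNReal.div_add_div_same.symm

lemma essentialBoundary_union {d : ℕ} (A B : Set (EuclideanSpace ℝ (Fin d))) :
    essentialBoundary (A ∪ B) ⊆ essentialBoundary A ∪ essentialBoundary B := by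
  intro x hx
  by_contra hmem
  rw [mem_union, not_or] at hmem
  obtain ⟨h1, h2⟩ := hmem
  simp only [essentialBoundary, mem_setOf_eq, not_and_or, not_not] at h1 h2
  rcases h1 with h1 | h1
  · rcases h2 with h2 | h2
    · exact hx.1 (hasDensity_union_zero h1 h2)
    · refine hx.2 ?_
      rw [union_comm]
      exact hasDensity_union_one h2
  · exact hx.2 (hasDensity_union_one h1)

lemma volume_longCuboid (d : ℕ) (l σ : ℝ) (hl : 0 < l) (hσ : 0 < σ)
    (x₀ : EuclideanSpace ℝ (Fin (d+1))) :
    volume (longCuboid l σ x₀) = ENNReal.ofReal (2 * l * σ ^ d) := by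
  have key : longCuboid l σ x₀ =
      ((MeasurableEquiv.toLp 2 (Fin (d+1) → ℝ)).symm) ⁻¹'
        (Set.pi univ fun i => Ioo (x₀ i - (if i = 0 then l else σ/2))
          (x₀ i + (if i = 0 then l else σ/2))) := by
    ext x
    show _ ↔ ∀ i, i ∈ (univ : Set (Fin (d+1))) → x i ∈ Ioo _ _
    simp only [longCuboid, mem_setOf_eq, mem_univ, forall_true_left, mem_Ioo]
    constructor
    · rintro ⟨h0, hi⟩ i
      by_cases h : i = 0
      · subst h
        simp only [if_pos rfl, if_true]
        rw [abs_sub_lt_iff] at h0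
        constructor <;> linarith [h0.1, h0.2]
      · simp only [if_neg h]
        have h2 := hi i h
        rw [abs_sub_lt_iff] at h2
        constructor <;> linarith [h2.1, h2.2]
    · intro h
      constructor
      · have h2 := h 0
        simp only [if_pos rfl, if_true] at h2
        rw [abs_sub_lt_iff]
        constructor <;> linarith [h2.1, h2.2]
      · intro i hi
        have h2 := h i
        simp only [if_neg hi] at h2
        rw [abs_sub_lt_iff]
        constructor <;> linarith [h2.1, h2.2]
  rw [key, (EuclideanSpace.volume_preserving_symm_measurableEquiv_toLp (Fin (d+1))).measure_preimage
    (MeasurableSet.univ_pi (fun i => measurableSet_Ioo)).nullMeasurableSet]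
  rw [volume_pi_pi]
  simp only [Real.volume_Ioo]
  have hlen : ∀ i : Fin (d+1), x₀ i + (if i = 0 then l else σ/2) -
      (x₀ i - (if i = 0 then l else σ/2)) = 2 * (if i = 0 then l else σ/2) := by
    intro i; ring
  simp only [hlen]
  rw [Fin.prod_univ_succ]
  simp only [if_pos rfl, if_true, Fin.succ_ne_zero, if_neg, ite_false]
  rw [Finset.prod_const, Finset.card_univ, Fintype.card_fin]
  have h2σ : (2 : ℝ) * (σ / 2) = σ := by ring
  rw [h2σ]
  rw [← ENNReal.ofReal_pow hσ.le, ← ENNReal.ofReal_mul (by positivity)]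

/-- **Dominant component 1.** Given the relative isoperimetric inequality on long cuboids with
constant `Ciso`, there is `T₀ ∈ ℕ` such that any Caccioppoli partition of a cuboid with
`l/σ ≥ T₀` and total relative perimeter less than `σ^{d-1}` has a dominant component. -/
theorem dominant_component_one (d : ℕ) (Ciso : ℝ) (hCiso : 1 ≤ Ciso)
    (hiso : ∀ (l σ : ℝ) (x₀ : EuclideanSpace ℝ (Fin (d + 1))),
      0 < l → 0 < σ → 1 ≤ l / σ →
      ∀ P : Set (EuclideanSpace ℝ (Fin (d + 1))),
        P ⊆ longCuboid l σ x₀ →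
        μH[(d : ℝ)] (essentialBoundary P ∩ longCuboid l σ x₀) < ENNReal.ofReal (σ ^ d) →
        min (volume P) (volume (longCuboid l σ x₀ \ P)) ≤
          ENNReal.ofReal (Ciso * σ) * μH[(d : ℝ)] (essentialBoundary P ∩ longCuboid l σ x₀)) :
    ∃ T₀ : ℕ, 0 < T₀ ∧
      ∀ (l σ : ℝ) (x₀ : EuclideanSpace ℝ (Fin (d + 1)))
        (P : ℕ → Set (EuclideanSpace ℝ (Fin (d + 1)))),
        0 < l → 0 < σ → (T₀ : ℝ) ≤ l / σ →
        IsCaccioppoliPartition (longCuboid l σ x₀) P →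
        μH[(d : ℝ)] ((⋃ j, essentialBoundary (P j)) ∩ longCuboid l σ x₀) <
          ENNReal.ofReal (σ ^ d) →
        (∀ j, volume (P j) ≤ volume (P 0)) →
        volume (longCuboid l σ x₀ \ P 0) ≤
            ENNReal.ofReal (Ciso * σ) *
              μH[(d : ℝ)] (essentialBoundary (P 0) ∩ longCuboid l σ x₀) ∧
          (1 / 2 : ℝ≥0∞) * volume (longCuboid l σ x₀) < volume (P 0) := by
  have hCpos : 0 < Ciso := lt_of_lt_of_le one_pos hCiso
  have hceil : 0 < ⌈Ciso⌉₊ := Nat.ceil_pos.mpr hCpos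
  refine ⟨2 * ⌈Ciso⌉₊, by omega, ?_⟩
  intro l σ x₀ P hl hσ hT hpart hH hmax
  obtain ⟨hsub, hdisj, hcover, hfinper⟩ := hpart
  set S := longCuboid l σ x₀ with hS
  have hV : volume S = ENNReal.ofReal (2 * l * σ ^ d) := volume_longCuboid d l σ hl hσ x₀
  have hT2 : (2 : ℝ) ≤ (2 * ⌈Ciso⌉₊ : ℕ) := by
    push_cast
    have : (1 : ℝ) ≤ ⌈Ciso⌉₊ := by exact_mod_cast hceil
    linarith
  have h1T : 1 ≤ l / σ := le_trans (by linarith) hT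
  have hlσ : ((2 * ⌈Ciso⌉₊ : ℕ) : ℝ) * σ ≤ l := by
    rw [← le_div_iff₀ hσ]
    exact hT
  have hCl : 2 * Ciso * σ ≤ l := by
    refine le_trans ?_ hlσ
    push_cast
    have hcc : Ciso ≤ (⌈Ciso⌉₊ : ℝ) := Nat.le_ceil Ciso
    nlinarith
  set C : ℝ≥0∞ := ENNReal.ofReal (Ciso * σ * σ ^ d) with hC
  have hσd : (0:ℝ) < σ ^ d := pow_pos hσ d
  have hC3 : 3 * C < volume S := by
    rw [hV, hC]
    rw [show (3 : ℝ≥0∞) = ENNReal.ofReal 3 by norm_num,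
      ← ENNReal.ofReal_mul (by norm_num)]
    refine ENNReal.ofReal_lt_ofReal_iff (by positivity) |>.mpr ?_
    nlinarith [mul_pos (mul_pos hCpos hσ) hσd]
  have hCC3 : C ≤ 3 * C := le_mul_of_one_le_left zero_le (by norm_num)
  have h2C3 : C + C ≤ 3 * C := by
    rw [show (3:ℝ≥0∞) * C = C + C + C by ring]
    exact le_add_of_nonneg_right zero_le
  have hVhalf : (1/2 : ℝ≥0∞) * volume S + (1/2 : ℝ≥0∞) * volume S = volume S := by
    rw [one_div, ← ENNReal.div_eq_inv_mul, ENNReal.add_halves]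
  have hhalf_ne : (1/2 : ℝ≥0∞) * volume S ≠ ⊤ := by
    refine ENNReal.mul_ne_top (by norm_num) ?_
    rw [hV]; exact ENNReal.ofReal_ne_top
  -- if half the volume were ≤ C we'd contradict hC3
  have hChalf : C < (1/2 : ℝ≥0∞) * volume S := by
    by_contra hcon
    push_neg at hcon
    have : volume S ≤ 3 * C := by
      calc volume S = (1/2 : ℝ≥0∞) * volume S + (1/2 : ℝ≥0∞) * volume S := hVhalf.symm
        _ ≤ C + C := add_le_add hcon hcon
        _ ≤ 3 * C := h2C3
    exact absurd (lt_of_lt_of_le hC3 this) (lt_irrefl _)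
  -- Hausdorff bound for any set whose essential boundary is inside the union
  have hHj : ∀ Q : Set (EuclideanSpace ℝ (Fin (d+1))),
      essentialBoundary Q ⊆ ⋃ j, essentialBoundary (P j) →
      μH[(d : ℝ)] (essentialBoundary Q ∩ S) < ENNReal.ofReal (σ ^ d) :=
    fun Q hQ => lt_of_le_of_lt (measure_mono (inter_subset_inter_left _ hQ)) hH
  set A : ℕ → Set (EuclideanSpace ℝ (Fin (d+1))) := fun n => partialSups P n with hA
  have hAsub : ∀ n, A n ⊆ S := fun n => partialSups_le P n S (fun m _ => hsub m)
  have hAbd : ∀ n, essentialBoundary (A n) ⊆ ⋃ j, essentialBoundary (P j) := by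
    intro n
    induction n with
    | zero =>
      have h0 : A 0 = P 0 := partialSups_zero P
      rw [h0]
      exact subset_iUnion (fun j => essentialBoundary (P j)) 0
    | succ n ih =>
      have hs : A (n+1) = A n ∪ P (n+1) := partialSups_succ P n
      rw [hs]
      exact (essentialBoundary_union _ _).trans
        (union_subset ih (subset_iUnion (fun j => essentialBoundary (P j)) (n+1)))
  have hAiso : ∀ n, min (volume (A n)) (volume (S \ A n)) ≤ C := by
    intro n
    refine (hiso l σ x₀ hl hσ h1T (A n) (hAsub n) (hHj _ (hAbd n))).trans ?_
    calc ENNReal.ofReal (Ciso * σ) * μH[(d : ℝ)] (essentialBoundary (A n) ∩ S)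
        ≤ ENNReal.ofReal (Ciso * σ) * ENNReal.ofReal (σ ^ d) :=
          mul_le_mul_right (le_of_lt (hHj _ (hAbd n))) _
      _ = C := by rw [hC, ← ENNReal.ofReal_mul (by positivity)]
  have hmono : Monotone A := (partialSups P).monotone
  have hUnion : volume (⋃ n, A n) = volume S := by
    have he : (⋃ n, A n) = ⋃ n, P n := iSup_partialSups_eq P
    rw [he]
    refine le_antisymm (measure_mono (iUnion_subset hsub)) ?_
    calc volume S ≤ volume (S ∩ ⋃ n, P n) + volume (S \ ⋃ n, P n) :=
          measure_le_inter_add_diff _ _ _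
      _ = volume (S ∩ ⋃ n, P n) := by rw [hcover, add_zero]
      _ ≤ volume (⋃ n, P n) := measure_mono inter_subset_right
  have hex : ∃ n, C < volume (A n) := by
    have hCV : C < volume (⋃ n, A n) := by
      rw [hUnion]
      exact lt_of_le_of_lt hCC3 hC3
    exact ((tendsto_measure_iUnion_atTop hmono).eventually (eventually_gt_nhds hCV)).exists
  set N := Nat.find hex with hNdef
  have hN : C < volume (A N) := Nat.find_spec hex
  have hNmin : volume (S \ A N) ≤ C := by
    rcases le_or_gt (volume (S \ A N)) C with h | h
    · exact h
    · exact absurd (hAiso N) (not_le_of_gt (lt_min hN h))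
  have hVle : volume S ≤ volume (A N) + C := by
    calc volume S ≤ volume (S ∩ A N) + volume (S \ A N) := measure_le_inter_add_diff _ _ _
      _ ≤ volume (A N) + C := add_le_add (measure_mono inter_subset_right) hNmin
  rcases Nat.eq_zero_or_pos N with hN0 | hNpos
  · -- N = 0 : P 0 is the dominant component
    have hA0 : A N = P 0 := by rw [hN0]; exact partialSups_zero P
    rw [hA0] at hVle hNmin
    have hhalf : (1/2 : ℝ≥0∞) * volume S < volume (P 0) := by
      by_contra hcon
      push_neg at hcon
      have h2 : volume S ≤ (1/2 : ℝ≥0∞) * volume S + C :=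
        le_trans hVle (add_le_add_left hcon _)
      have h3 : (1/2 : ℝ≥0∞) * volume S ≤ C := by
        have h4 : (1/2 : ℝ≥0∞) * volume S + (1/2 : ℝ≥0∞) * volume S ≤
            (1/2 : ℝ≥0∞) * volume S + C := by
          rw [hVhalf]; exact h2
        exact (ENNReal.add_le_add_iff_left hhalf_ne).mp h4
      have h5 : volume S ≤ 3 * C := by
        calc volume S = (1/2 : ℝ≥0∞) * volume S + (1/2 : ℝ≥0∞) * volume S := hVhalf.symm
          _ ≤ C + C := add_le_add h3 h3
          _ ≤ 3 * C := h2C3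
      exact absurd (lt_of_lt_of_le hC3 h5) (lt_irrefl _)
    refine ⟨?_, hhalf⟩
    have hmin : min (volume (P 0)) (volume (S \ P 0)) = volume (S \ P 0) :=
      min_eq_right (le_of_lt (lt_of_le_of_lt hNmin (lt_trans hChalf hhalf)))
    have hfinal := hiso l σ x₀ hl hσ h1T (P 0) (hsub 0)
      (hHj _ (subset_iUnion (fun j => essentialBoundary (P j)) 0))
    rw [hmin] at hfinal
    exact hfinal
  · -- N > 0 : impossible
    exfalso
    have hprev : ¬ C < volume (A (N - 1)) := Nat.find_min hex (Nat.sub_lt hNpos one_pos)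
    push_neg at hprev
    have hsucc : A N = A (N - 1) ∪ P N := by
      have : N = (N - 1) + 1 := by omega
      rw [this]
      exact partialSups_succ P (N - 1)
    have hAN : volume (A N) ≤ volume (A (N - 1)) + volume (P N) := by
      rw [hsucc]
      exact measure_union_le _ _
    have hP0le : volume (P 0) ≤ C :=
      le_trans (measure_mono (le_partialSups_of_le P (Nat.zero_le (N - 1)))) hprev
    have hchain : volume S ≤ 3 * C := by
      calc volume S ≤ volume (A N) + C := hVle
        _ ≤ (volume (A (N - 1)) + volume (P N)) + C := add_le_add_left hAN _
        _ ≤ (C + volume (P 0)) + C := add_le_add_left (add_le_add hprev (hmax N)) _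
        _ ≤ (C + C) + C := add_le_add_left (add_le_add_right hP0le _) _
        _ = 3 * C := by ring
    exact absurd (lt_of_lt_of_le hC3 hchain) (lt_irrefl _)
end
end

section
/- Let $\delta > 0$. There exists a constant $C > 0$ depending only on $\delta$ such that for every matrix $G \in \mathbb{R}^{3\times 3}$, vector $b \in \mathbb{R}^3$, point $x \in \mathbb{R}^3$, radius $r > 0$, and measurable set $E \subset B_r(x)$ with $\mathcal{L}^3(E) \geq \delta r^3$, the affine map $a(z) := Gz + b$ satisfies $\|a\|_{L^\infty(B_r(x))} \leq C r^{-3}\, \mathcal{L}^3(E)^{1/2}\, \|a\|_{L^2(E)}$ and $|G| \leq C r^{-4}\, \mathcal{L}^3(E)^{1/2}\, \|a\|_{L^2(E)}$. -/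
open MeasureTheory Metric Filter Set
open scoped ENNReal Topology RealInnerProductSpace

noncomputable section

/-- The Frobenius norm of a `3×3` real matrix. -/
def frob (G : Matrix (Fin 3) (Fin 3) ℝ) : ℝ :=
  Real.sqrt (∑ i, ∑ j, (G i j) ^ 2)

/-- The affine map `z ↦ G z + b` on `ℝ³`. -/
def affineMap3 (G : Matrix (Fin 3) (Fin 3) ℝ) (b : EuclideanSpace ℝ (Fin 3)) :
    EuclideanSpace ℝ (Fin 3) → EuclideanSpace ℝ (Fin 3) :=
  fun z => (EuclideanSpace.equiv (Fin 3) ℝ).symm (G.mulVec (EuclideanSpace.equiv (Fin 3) ℝ z)) + b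

namespace EstimateAffine

abbrev E3 := EuclideanSpace ℝ (Fin 3)

lemma coord_le_norm (y : E3) (i : Fin 3) : |y i| ≤ ‖y‖ := by
  rw [EuclideanSpace.norm_eq, ← Real.sqrt_sq_eq_abs]
  apply Real.sqrt_le_sqrt
  have : ∀ j, (0:ℝ) ≤ ‖y j‖ ^ 2 := fun j => sq_nonneg _
  calc y i ^ 2 = ‖y i‖ ^ 2 := by rw [Real.norm_eq_abs, sq_abs]
  _ ≤ ∑ j, ‖y j‖ ^ 2 := Finset.single_le_sum (fun j _ => this j) (Finset.mem_univ i)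

lemma slab_volume (u : E3) (hu : ‖u‖ = 1) (s t r : ℝ) (x : E3) (ht : 0 ≤ t) (hr : 0 ≤ r) :
    volume {z : E3 | |⟪z, u⟫ - s| ≤ t ∧ z ∈ ball x r} ≤ ENNReal.ofReal (8 * t * r ^ 2) := by
  have hcard : Module.finrank ℝ E3 = Fintype.card (Fin 3) := by simp
  have horth : Orthonormal ℝ (({0} : Set (Fin 3)).restrict (fun _ => u)) := by
    rw [orthonormal_iff_ite]
    intro i j
    have : i = j := Subsingleton.elim i j
    subst this
    rw [if_pos rfl]
    show ⟪u, u⟫ = 1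
    rw [real_inner_self_eq_norm_sq, hu]; norm_num
  obtain ⟨B, hB⟩ := horth.exists_orthonormalBasis_extension_of_card_eq hcard
  have hB0 : B 0 = u := hB 0 (mem_singleton 0)
  set T := B.repr with hT
  set I : Fin 3 → Set ℝ := fun i =>
    if i = 0 then Icc (s - t) (s + t) else Icc (T x i - r) (T x i + r) with hI
  set Box : Set E3 := (MeasurableEquiv.toLp 2 (Fin 3 → ℝ)).symm ⁻¹' (Set.univ.pi I) with hBox
  have hsub : {z : E3 | |⟪z, u⟫ - s| ≤ t ∧ z ∈ ball x r} ⊆ T ⁻¹' Box := by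
    rintro z ⟨hz1, hz2⟩
    intro i _
    simp only [hI]
    show T z i ∈ _
    by_cases hi : i = 0
    · subst hi
      have : T z 0 = ⟪z, u⟫ := by
        rw [hT, B.repr_apply_apply, hB0, real_inner_comm]
      rw [if_pos rfl, this]
      constructor <;> linarith [(abs_le.mp hz1).1, (abs_le.mp hz1).2]
    · rw [if_neg hi]
      have h1 : |T z i - T x i| ≤ ‖T z - T x‖ := by
        have := coord_le_norm (T z - T x) i
        simpa using this
      have h2 : ‖T z - T x‖ = dist z x := by
        rw [← T.map_sub, T.norm_map, dist_eq_norm]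
      have hlt : dist z x < r := mem_ball.mp hz2
      rw [h2] at h1
      have habs := abs_le.mp (h1.trans hlt.le)
      constructor <;> linarith [habs.1, habs.2]
  have hImeas : MeasurableSet (Set.univ.pi I) :=
    MeasurableSet.univ_pi (fun i => by simp only [hI]; split <;> exact measurableSet_Icc)
  have hBoxmeas : MeasurableSet Box :=
    (MeasurableEquiv.toLp 2 (Fin 3 → ℝ)).symm.measurable hImeas
  calc volume {z : E3 | |⟪z, u⟫ - s| ≤ t ∧ z ∈ ball x r}
      ≤ volume (T ⁻¹' Box) := measure_mono hsub
    _ = volume Box := B.measurePreserving_repr.measure_preimage hBoxmeas.nullMeasurableSet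
    _ = volume (Set.univ.pi I) :=
        (EuclideanSpace.volume_preserving_symm_measurableEquiv_toLp (Fin 3)).measure_preimage
          hImeas.nullMeasurableSet
    _ = ∏ i, volume (I i) := volume_pi_pi I
    _ ≤ ENNReal.ofReal (8 * t * r ^ 2) := by
        rw [Fin.prod_univ_three]
        have h0 : I 0 = Icc (s - t) (s + t) := by simp [hI]
        have h1' : I 1 = Icc (T x 1 - r) (T x 1 + r) := by
          simp only [hI]; rw [if_neg (by decide)]
        have h2' : I 2 = Icc (T x 2 - r) (T x 2 + r) := by
          simp only [hI]; rw [if_neg (by decide)]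
        rw [h0, h1', h2', Real.volume_Icc, Real.volume_Icc, Real.volume_Icc]
        have e1 : s + t - (s - t) = 2 * t := by ring
        have e2 : ∀ c : ℝ, c + r - (c - r) = 2 * r := fun c => by ring
        rw [e1, e2, e2, ← ENNReal.ofReal_mul (by linarith), ← ENNReal.ofReal_mul (by positivity)]
        apply ENNReal.ofReal_le_ofReal
        nlinarith [sq_nonneg r, sq_nonneg (r - t)]

/-- Integrability of a bounded continuous function on a subset of a ball. -/
lemma integrableOn_of_cont_bdd {f : E3 → ℝ} (hf : Continuous f) {E : Set E3} {x : E3} {r : ℝ}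
    (hE : E ⊆ ball x r) (hEm : MeasurableSet E) {M : ℝ} (hM : ∀ z ∈ ball x r, |f z| ≤ M) :
    IntegrableOn f E volume := by
  apply Measure.integrableOn_of_bounded (M := M)
  · exact ((measure_mono hE).trans_lt measure_ball_lt_top).ne
  · exact hf.aestronglyMeasurable
  · filter_upwards [ae_restrict_mem hEm] with z hz
    exact hM z (hE hz)

lemma lower_bound_inner (δ : ℝ) (hδ : 0 < δ) (u : E3) (hu : ‖u‖ = 1) (s : ℝ)
    (x : E3) (r : ℝ) (hr : 0 < r) (E : Set E3) (hEm : MeasurableSet E)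
    (hEb : E ⊆ ball x r) (hvol : ENNReal.ofReal (δ * r ^ 3) ≤ volume E) :
    δ ^ 3 * r ^ 5 / 512 ≤ ∫ z in E, (⟪z, u⟫ - s) ^ 2 := by
  set t : ℝ := δ * r / 16 with hts
  have ht : 0 < t := by positivity
  have hcont : Continuous fun z : E3 => ⟪z, u⟫ - s :=
    (continuous_id.inner continuous_const).sub continuous_const
  set F : Set E3 := E \ {z | |⟪z, u⟫ - s| ≤ t} with hF
  have hSm : MeasurableSet {z : E3 | |⟪z, u⟫ - s| ≤ t} :=
    measurableSet_le (hcont.abs.measurable) measurable_const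
  have hFm : MeasurableSet F := hEm.diff hSm
  have hFball : F ⊆ ball x r := (diff_subset).trans hEb
  have hFfin : volume F ≠ ∞ := ((measure_mono hFball).trans_lt measure_ball_lt_top).ne
  have hEfin : volume E ≠ ∞ := ((measure_mono hEb).trans_lt measure_ball_lt_top).ne
  have hslab : volume (E ∩ {z | |⟪z, u⟫ - s| ≤ t}) ≤ ENNReal.ofReal (δ * r ^ 3 / 2) := by
    refine (measure_mono ?_).trans ((slab_volume u hu s t r x ht.le hr.le).trans ?_)
    · intro z hz; exact ⟨hz.2, hEb hz.1⟩
    · apply ENNReal.ofReal_le_ofReal; rw [hts]; ring_nf; nlinarith [sq_nonneg r, hr.le, hδ.le]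
  have hvolF : ENNReal.ofReal (δ * r ^ 3 / 2) ≤ volume F := by
    have hsplit : volume E ≤ volume F + ENNReal.ofReal (δ * r ^ 3 / 2) := by
      calc volume E ≤ volume (F ∪ (E ∩ {z | |⟪z, u⟫ - s| ≤ t})) := by
            apply measure_mono; intro z hz
            by_cases h : |⟪z, u⟫ - s| ≤ t
            · exact Or.inr ⟨hz, h⟩
            · exact Or.inl ⟨hz, h⟩
        _ ≤ volume F + volume (E ∩ {z | |⟪z, u⟫ - s| ≤ t}) := measure_union_le _ _
        _ ≤ volume F + ENNReal.ofReal (δ * r ^ 3 / 2) := by gcongr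
    have h2 : ENNReal.ofReal (δ * r ^ 3 / 2) + ENNReal.ofReal (δ * r ^ 3 / 2)
        ≤ volume F + ENNReal.ofReal (δ * r ^ 3 / 2) := by
      refine le_trans ?_ hsplit
      rw [← ENNReal.ofReal_add (by positivity) (by positivity)]
      refine le_trans ?_ hvol
      apply ENNReal.ofReal_le_ofReal; linarith
    exact (ENNReal.add_le_add_iff_right ENNReal.ofReal_ne_top).mp h2
  have hFreal : δ * r ^ 3 / 2 ≤ (volume F).toReal :=
    (ENNReal.ofReal_le_iff_le_toReal hFfin).mp hvolF
  have hint : IntegrableOn (fun z => (⟪z, u⟫ - s) ^ 2) E volume := by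
    refine integrableOn_of_cont_bdd (hcont.pow 2) hEb hEm
      (M := (‖x‖ + r + |s|) ^ 2) (fun z hz => ?_)
    have h1 : |⟪z, u⟫ - s| ≤ ‖x‖ + r + |s| := by
      have h2 : |⟪z, u⟫| ≤ ‖z‖ := by
        have := abs_real_inner_le_norm z u
        rwa [hu, mul_one] at this
      have h3 : ‖z‖ ≤ ‖x‖ + r := by
        have := mem_ball_iff_norm.mp hz
        have h4 : ‖z‖ - ‖x‖ ≤ ‖z - x‖ := norm_sub_norm_le z x
        linarith
      calc |⟪z, u⟫ - s| ≤ |⟪z, u⟫| + |s| := abs_sub _ _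
        _ ≤ ‖x‖ + r + |s| := by linarith
    calc |(⟪z, u⟫ - s) ^ 2| = |⟪z, u⟫ - s| ^ 2 := by rw [abs_pow]
      _ ≤ (‖x‖ + r + |s|) ^ 2 := by
          apply pow_le_pow_left₀ (abs_nonneg _) h1
  have hlow : t ^ 2 * (volume F).toReal ≤ ∫ z in F, (⟪z, u⟫ - s) ^ 2 := by
    refine setIntegral_ge_of_const_le_real hFm hFfin (fun z hz => ?_) (hint.mono_set diff_subset)
    have : t < |⟪z, u⟫ - s| := lt_of_not_ge hz.2
    calc t ^ 2 ≤ |⟪z, u⟫ - s| ^ 2 := by apply pow_le_pow_left₀ ht.le this.le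
      _ = (⟪z, u⟫ - s) ^ 2 := by rw [sq_abs]
  have hmono : (∫ z in F, (⟪z, u⟫ - s) ^ 2) ≤ ∫ z in E, (⟪z, u⟫ - s) ^ 2 := by
    apply setIntegral_mono_set hint
      (Filter.Eventually.of_forall fun z => sq_nonneg _)
      (HasSubset.Subset.eventuallyLE diff_subset)
  have hfinal : δ ^ 3 * r ^ 5 / 512 ≤ t ^ 2 * (volume F).toReal := by
    calc δ ^ 3 * r ^ 5 / 512 = t ^ 2 * (δ * r ^ 3 / 2) := by rw [hts]; ring
      _ ≤ t ^ 2 * (volume F).toReal := by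
          apply mul_le_mul_of_nonneg_left hFreal (sq_nonneg _)
  linarith

def rowVec (G : Matrix (Fin 3) (Fin 3) ℝ) (i : Fin 3) : E3 :=
  (EuclideanSpace.equiv (Fin 3) ℝ).symm (G i)

lemma frob_nonneg (G : Matrix (Fin 3) (Fin 3) ℝ) : 0 ≤ frob G := Real.sqrt_nonneg _

lemma norm_rowVec_sq (G : Matrix (Fin 3) (Fin 3) ℝ) (i : Fin 3) :
    ‖rowVec G i‖ ^ 2 = ∑ j, (G i j) ^ 2 := by
  rw [EuclideanSpace.norm_eq, Real.sq_sqrt (by positivity)]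
  refine Finset.sum_congr rfl fun j _ => ?_
  rw [Real.norm_eq_abs, sq_abs]
  rfl

lemma frob_sq (G : Matrix (Fin 3) (Fin 3) ℝ) : frob G ^ 2 = ∑ i, ‖rowVec G i‖ ^ 2 := by
  rw [frob, Real.sq_sqrt (by positivity)]
  exact (Finset.sum_congr rfl fun i _ => (norm_rowVec_sq G i).symm)

lemma affine_cont (G : Matrix (Fin 3) (Fin 3) ℝ) (b : E3) :
    Continuous (affineMap3 G b) := by
  unfold affineMap3
  refine Continuous.add ?_ continuous_const
  refine Continuous.comp (EuclideanSpace.equiv (Fin 3) ℝ).symm.continuous ?_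
  exact (Continuous.matrix_mulVec continuous_const
    (EuclideanSpace.equiv (Fin 3) ℝ).continuous)

lemma affine_sub (G : Matrix (Fin 3) (Fin 3) ℝ) (b z w : E3) :
    affineMap3 G b z - affineMap3 G b w =
      (EuclideanSpace.equiv (Fin 3) ℝ).symm
        (G.mulVec ((EuclideanSpace.equiv (Fin 3) ℝ) (z - w))) := by
  simp only [affineMap3, add_sub_add_right_eq_sub, ← map_sub, ← Matrix.mulVec_sub]

lemma mulVec_coord (G : Matrix (Fin 3) (Fin 3) ℝ) (v : E3) (i : Fin 3) :
    G.mulVec ((EuclideanSpace.equiv (Fin 3) ℝ) v) i = ⟪v, rowVec G i⟫ := by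
  simp only [Matrix.mulVec, dotProduct, PiLp.inner_apply, RCLike.inner_apply,
    starRingEnd_apply, star_trivial]
  refine Finset.sum_congr rfl fun j _ => ?_
  rw [mul_comm]
  exact mul_comm _ _

lemma norm_sq_symm (w : Fin 3 → ℝ) :
    ‖((EuclideanSpace.equiv (Fin 3) ℝ).symm w : E3)‖ ^ 2 = ∑ i, (w i) ^ 2 := by
  rw [EuclideanSpace.norm_eq, Real.sq_sqrt (by positivity)]
  refine Finset.sum_congr rfl fun j _ => ?_
  rw [Real.norm_eq_abs, sq_abs]
  rfl

lemma affine_diff_sq (G : Matrix (Fin 3) (Fin 3) ℝ) (b z w : E3) :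
    ‖affineMap3 G b z - affineMap3 G b w‖ ^ 2 = ∑ i, ⟪z - w, rowVec G i⟫ ^ 2 := by
  rw [affine_sub, norm_sq_symm]
  exact Finset.sum_congr rfl fun i _ => by rw [mulVec_coord]

lemma affine_lip (G : Matrix (Fin 3) (Fin 3) ℝ) (b z w : E3) :
    ‖affineMap3 G b z - affineMap3 G b w‖ ≤ frob G * ‖z - w‖ := by
  have hsq : ‖affineMap3 G b z - affineMap3 G b w‖ ^ 2 ≤ (frob G * ‖z - w‖) ^ 2 := by
    rw [affine_diff_sq, mul_pow, frob_sq, Finset.sum_mul]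
    refine Finset.sum_le_sum fun i _ => ?_
    have h := abs_real_inner_le_norm (z - w) (rowVec G i)
    calc ⟪z - w, rowVec G i⟫ ^ 2 = |⟪z - w, rowVec G i⟫| ^ 2 := (sq_abs _).symm
      _ ≤ (‖z - w‖ * ‖rowVec G i‖) ^ 2 := by
          apply pow_le_pow_left₀ (abs_nonneg _) h
      _ = ‖rowVec G i‖ ^ 2 * ‖z - w‖ ^ 2 := by ring
  have h1 : (0:ℝ) ≤ frob G * ‖z - w‖ := mul_nonneg (frob_nonneg G) (norm_nonneg _)
  nlinarith [norm_nonneg (affineMap3 G b z - affineMap3 G b w)]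

lemma affine_bound (G : Matrix (Fin 3) (Fin 3) ℝ) (b z : E3) :
    ‖affineMap3 G b z‖ ≤ frob G * ‖z‖ + ‖b‖ := by
  have h0 : affineMap3 G b 0 = b := by
    simp [affineMap3]
  have := affine_lip G b z 0
  rw [h0, sub_zero] at this
  calc ‖affineMap3 G b z‖ = ‖(affineMap3 G b z - b) + b‖ := by rw [sub_add_cancel]
    _ ≤ ‖affineMap3 G b z - b‖ + ‖b‖ := norm_add_le _ _
    _ ≤ frob G * ‖z‖ + ‖b‖ := by linarith

lemma le_of_sq_le_sq (a c : ℝ) (ha : 0 ≤ a) (hc : 0 ≤ c) (h : a ^ 2 ≤ c ^ 2) : a ≤ c := by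
  nlinarith

end EstimateAffine

open EstimateAffine

set_option maxHeartbeats 2000000 in
/-- **Estimate on affine maps.** -/
theorem estimate_on_affine_maps (δ : ℝ) (hδ : 0 < δ) :
    ∃ C : ℝ, 0 < C ∧
      ∀ (G : Matrix (Fin 3) (Fin 3) ℝ) (b x : EuclideanSpace ℝ (Fin 3)) (r : ℝ)
        (E : Set (EuclideanSpace ℝ (Fin 3))),
        0 < r → MeasurableSet E → E ⊆ Metric.ball x r →
        ENNReal.ofReal (δ * r ^ 3) ≤ volume E →
        (∀ z ∈ Metric.ball x r,
            ‖affineMap3 G b z‖ ≤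
              C * r⁻¹ ^ 3 * (volume E).toReal ^ (1 / 2 : ℝ) *
                Real.sqrt (∫ w in E, ‖affineMap3 G b w‖ ^ 2)) ∧
          frob G ≤
            C * r⁻¹ ^ 4 * (volume E).toReal ^ (1 / 2 : ℝ) *
              Real.sqrt (∫ w in E, ‖affineMap3 G b w‖ ^ 2) := by
  refine ⟨1024 / δ ^ 2 + 2 / δ, by positivity, ?_⟩
  set C : ℝ := 1024 / δ ^ 2 + 2 / δ with hC
  have hCpos : 0 < C := by positivity
  have hCd : C * δ ^ 2 = 1024 + 2 * δ := by rw [hC]; field_simp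
  clear_value C
  intro G b x r E hr hEm hEb hvol
  set a := affineMap3 G b with ha
  set Q := ∫ w in E, ‖a w‖ ^ 2 with hQdef
  have hEfin : volume E ≠ ∞ := ((measure_mono hEb).trans_lt measure_ball_lt_top).ne
  set V := (volume E).toReal with hV
  have hVlb : δ * r ^ 3 ≤ V := (ENNReal.ofReal_le_iff_le_toReal hEfin).mp hvol
  have hVpos : 0 < V := lt_of_lt_of_le (by positivity) hVlb
  have hE0 : volume E ≠ 0 := by
    intro h
    rw [hV, h] at hVpos
    simp at hVpos
  -- integrability of ‖a‖²
  have hacont : Continuous a := affine_cont G b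
  have habd : ∀ z ∈ ball x r, |‖a z‖ ^ 2| ≤ (frob G * (‖x‖ + r) + ‖b‖) ^ 2 := by
    intro z hz
    have h1 : ‖z‖ ≤ ‖x‖ + r := by
      have := mem_ball_iff_norm.mp hz
      have h4 : ‖z‖ - ‖x‖ ≤ ‖z - x‖ := norm_sub_norm_le z x
      linarith
    have h2 : ‖a z‖ ≤ frob G * (‖x‖ + r) + ‖b‖ := by
      have := affine_bound G b z
      have h3 : frob G * ‖z‖ ≤ frob G * (‖x‖ + r) :=
        mul_le_mul_of_nonneg_left h1 (frob_nonneg G)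
      rw [ha]; linarith
    rw [abs_of_nonneg (sq_nonneg _)]
    exact pow_le_pow_left₀ (norm_nonneg _) h2 2
  have hint : IntegrableOn (fun z => ‖a z‖ ^ 2) E volume :=
    integrableOn_of_cont_bdd (hacont.norm.pow 2) hEb hEm habd
  have hQ0 : 0 ≤ Q := setIntegral_nonneg hEm (fun z _ => sq_nonneg _)
  set K := Real.sqrt Q with hK
  have hK0 : 0 ≤ K := Real.sqrt_nonneg _
  have hKsq : K ^ 2 = Q := Real.sq_sqrt hQ0
  -- W = V^(1/2)
  set W := V ^ (1 / 2 : ℝ) with hW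
  have hW0 : 0 ≤ W := Real.rpow_nonneg hVpos.le _
  have hWV : W ^ 2 = V := by
    rw [hW, ← Real.rpow_natCast (V ^ (1 / 2 : ℝ)) 2, ← Real.rpow_mul hVpos.le]
    norm_num
  -- choice of z₀
  obtain ⟨z₀, hz₀E, hz₀avg⟩ := exists_le_setAverage hE0 hEfin hint
  rw [setAverage_eq, smul_eq_mul] at hz₀avg
  have hA : ‖a z₀‖ ^ 2 * V ≤ Q := by
    have := mul_le_mul_of_nonneg_right hz₀avg hVpos.le
    calc ‖a z₀‖ ^ 2 * V ≤ (volume E).toReal⁻¹ * Q * V := this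
      _ = Q := by rw [← hV]; field_simp
  have hz₀ball : z₀ ∈ ball x r := hEb hz₀E
  -- row estimates
  have hrow : ∀ i, ‖rowVec G i‖ ^ 2 * (δ ^ 3 * r ^ 5 / 512) ≤
      ∫ z in E, ⟪z - z₀, rowVec G i⟫ ^ 2 := by
    intro i
    by_cases hg : rowVec G i = 0
    · simp [hg]
    · set g := rowVec G i with hgdef
      have hgn : 0 < ‖g‖ := norm_pos_iff.mpr hg
      set u : E3 := ‖g‖⁻¹ • g with hu
      have hu1 : ‖u‖ = 1 := norm_smul_inv_norm hg
      have hlb := lower_bound_inner δ hδ u hu1 ⟪z₀, u⟫ x r hr E hEm hEb hvol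
      have hpt : ∀ z : E3, (⟪z, u⟫ - ⟪z₀, u⟫) ^ 2 = (‖g‖⁻¹) ^ 2 * ⟪z - z₀, g⟫ ^ 2 := by
        intro z
        rw [hu, real_inner_smul_right, real_inner_smul_right, inner_sub_left]
        ring
      have heq : (∫ z in E, (⟪z, u⟫ - ⟪z₀, u⟫) ^ 2) =
          (‖g‖⁻¹) ^ 2 * ∫ z in E, ⟪z - z₀, g⟫ ^ 2 := by
        rw [← integral_const_mul]
        exact integral_congr_ae (Filter.Eventually.of_forall fun z => hpt z)
      rw [heq] at hlb
      have := mul_le_mul_of_nonneg_left hlb (sq_nonneg ‖g‖)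
      calc ‖g‖ ^ 2 * (δ ^ 3 * r ^ 5 / 512)
          ≤ ‖g‖ ^ 2 * ((‖g‖⁻¹) ^ 2 * ∫ z in E, ⟪z - z₀, g⟫ ^ 2) := this
        _ = ∫ z in E, ⟪z - z₀, g⟫ ^ 2 := by
            field_simp
  -- integrability of each row term
  have hintg : ∀ i, IntegrableOn (fun z => ⟪z - z₀, rowVec G i⟫ ^ 2) E volume := by
    intro i
    refine integrableOn_of_cont_bdd
      ((((continuous_id.sub continuous_const).inner continuous_const)).pow 2) hEb hEm
      (M := (‖rowVec G i‖ * (r + ‖x - z₀‖)) ^ 2) (fun z hz => ?_)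
    have h1 : ‖z - z₀‖ ≤ r + ‖x - z₀‖ := by
      have h2 : ‖z - z₀‖ ≤ ‖z - x‖ + ‖x - z₀‖ := by
        have := norm_add_le (z - x) (x - z₀)
        simpa using this
      have h3 : ‖z - x‖ < r := mem_ball_iff_norm.mp hz
      linarith
    have h4 : |⟪z - z₀, rowVec G i⟫| ≤ ‖rowVec G i‖ * (r + ‖x - z₀‖) := by
      calc |⟪z - z₀, rowVec G i⟫| ≤ ‖z - z₀‖ * ‖rowVec G i‖ := abs_real_inner_le_norm _ _
        _ ≤ (r + ‖x - z₀‖) * ‖rowVec G i‖ := by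
            apply mul_le_mul_of_nonneg_right h1 (norm_nonneg _)
        _ = ‖rowVec G i‖ * (r + ‖x - z₀‖) := by ring
    calc |⟪z - z₀, rowVec G i⟫ ^ 2| = |⟪z - z₀, rowVec G i⟫| ^ 2 := by rw [abs_pow]
      _ ≤ (‖rowVec G i‖ * (r + ‖x - z₀‖)) ^ 2 := pow_le_pow_left₀ (abs_nonneg _) h4 2
  -- sum of rows
  have hsum : frob G ^ 2 * (δ ^ 3 * r ^ 5 / 512) ≤ ∫ z in E, ‖a z - a z₀‖ ^ 2 := by
    calc frob G ^ 2 * (δ ^ 3 * r ^ 5 / 512)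
        = ∑ i, ‖rowVec G i‖ ^ 2 * (δ ^ 3 * r ^ 5 / 512) := by
          rw [frob_sq, Finset.sum_mul]
      _ ≤ ∑ i, ∫ z in E, ⟪z - z₀, rowVec G i⟫ ^ 2 := Finset.sum_le_sum fun i _ => hrow i
      _ = ∫ z in E, ∑ i, ⟪z - z₀, rowVec G i⟫ ^ 2 :=
          (integral_finset_sum _ fun i _ => hintg i).symm
      _ = ∫ z in E, ‖a z - a z₀‖ ^ 2 := by
          refine integral_congr_ae (Filter.Eventually.of_forall fun z => ?_)
          show ∑ i, ⟪z - z₀, rowVec G i⟫ ^ 2 = ‖affineMap3 G b z - affineMap3 G b z₀‖ ^ 2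
          rw [affine_diff_sq]
  -- upper bound for the difference integral
  have hintd : IntegrableOn (fun z => ‖a z - a z₀‖ ^ 2) E volume := by
    refine integrableOn_of_cont_bdd ((hacont.sub continuous_const).norm.pow 2) hEb hEm
      (M := (frob G * (r + ‖x - z₀‖)) ^ 2) (fun z hz => ?_)
    have h1 : ‖z - z₀‖ ≤ r + ‖x - z₀‖ := by
      have h2 : ‖z - z₀‖ ≤ ‖z - x‖ + ‖x - z₀‖ := by
        have := norm_add_le (z - x) (x - z₀)
        simpa using this
      have h3 : ‖z - x‖ < r := mem_ball_iff_norm.mp hz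
      linarith
    have h4 : ‖a z - a z₀‖ ≤ frob G * (r + ‖x - z₀‖) := by
      calc ‖a z - a z₀‖ ≤ frob G * ‖z - z₀‖ := affine_lip G b z z₀
        _ ≤ frob G * (r + ‖x - z₀‖) := mul_le_mul_of_nonneg_left h1 (frob_nonneg G)
    calc |‖a z - a z₀‖ ^ 2| = ‖a z - a z₀‖ ^ 2 := abs_of_nonneg (sq_nonneg _)
      _ ≤ (frob G * (r + ‖x - z₀‖)) ^ 2 := pow_le_pow_left₀ (norm_nonneg _) h4 2
  have hdiff : (∫ z in E, ‖a z - a z₀‖ ^ 2) ≤ 4 * Q := by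
    have hptw : ∀ z ∈ E, ‖a z - a z₀‖ ^ 2 ≤ 2 * ‖a z‖ ^ 2 + 2 * ‖a z₀‖ ^ 2 := by
      intro z _
      have h := norm_sub_le (a z) (a z₀)
      nlinarith [h, norm_nonneg (a z), norm_nonneg (a z₀), norm_nonneg (a z - a z₀),
        sq_nonneg (‖a z‖ - ‖a z₀‖),
        mul_self_le_mul_self (norm_nonneg (a z - a z₀)) h]
    have hconst : IntegrableOn (fun _ : EuclideanSpace ℝ (Fin 3) => 2 * ‖a z₀‖ ^ 2) E volume :=
      integrableOn_const ((measure_mono hEb).trans_lt measure_ball_lt_top).ne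
    have hi2 : IntegrableOn (fun z => 2 * ‖a z‖ ^ 2 + 2 * ‖a z₀‖ ^ 2) E volume :=
      Integrable.add (hint.const_mul 2) hconst
    calc (∫ z in E, ‖a z - a z₀‖ ^ 2)
        ≤ ∫ z in E, (2 * ‖a z‖ ^ 2 + 2 * ‖a z₀‖ ^ 2) :=
          setIntegral_mono_on hintd hi2 hEm hptw
      _ = 2 * Q + 2 * ‖a z₀‖ ^ 2 * V := by
          rw [integral_add (hint.const_mul 2) hconst, integral_const_mul, setIntegral_const,
            measureReal_def, smul_eq_mul, ← hV, ← hQdef]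
          ring
      _ ≤ 2 * Q + 2 * Q := by linarith [hA]
      _ = 4 * Q := by ring
  -- make the abbreviations opaque for the arithmetic part
  have hlip' : ∀ z, ‖a z - a z₀‖ ≤ frob G * ‖z - z₀‖ := fun z => affine_lip G b z z₀
  clear_value a Q V K W
  -- polynomial inequalities
  have hB : frob G ^ 2 * (δ ^ 3 * r ^ 5) ≤ 2048 * Q := by linarith only [hsum.trans hdiff]
  have hr3 : (0:ℝ) ≤ r ^ 3 := by positivity
  have hB3 : frob G ^ 2 * δ ^ 3 * r ^ 8 ≤ 2048 * Q * r ^ 3 := by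
    have := mul_le_mul_of_nonneg_right hB hr3
    linarith only [this]
  have hQr3 : (0:ℝ) ≤ Q * r ^ 3 := mul_nonneg hQ0 hr3
  have h3 : (32768 : ℝ) ≤ C ^ 2 * δ ^ 4 := by
    have e : C ^ 2 * δ ^ 4 = (1024 + 2 * δ) ^ 2 := by rw [← hCd]; ring
    rw [e]
    have e2 : (1024 + 2 * δ) ^ 2 = 1048576 + 4096 * δ + 4 * δ ^ 2 := by ring
    linarith only [e2, hδ.le, sq_nonneg δ]
  have hCQ : (0:ℝ) ≤ C ^ 2 * δ ^ 3 * Q :=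
    mul_nonneg (by positivity) hQ0
  have hquad : C ^ 2 * δ ^ 3 * Q * (δ * r ^ 3) ≤ C ^ 2 * δ ^ 3 * Q * V :=
    mul_le_mul_of_nonneg_left hVlb hCQ
  have hF2δ : 16 * (frob G ^ 2 * r ^ 8) * δ ^ 3 ≤ C ^ 2 * V * Q * δ ^ 3 := by
    linarith only [hB3, mul_le_mul_of_nonneg_right h3 hQr3, hquad]
  have hF2 : 16 * (frob G ^ 2 * r ^ 8) ≤ C ^ 2 * V * Q :=
    le_of_mul_le_mul_right (by linarith only [hF2δ]) (by positivity : (0:ℝ) < δ ^ 3)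
  -- point bound auxiliary
  have h5 : (2:ℝ) ≤ C * δ := by
    have h6 : 2 / δ ≤ C := by
      rw [hC]
      have : (0:ℝ) ≤ 1024 / δ ^ 2 := by positivity
      linarith
    calc (2:ℝ) = (2 / δ) * δ := by field_simp
      _ ≤ C * δ := mul_le_mul_of_nonneg_right h6 hδ.le
  have hV2 : δ ^ 2 * r ^ 6 ≤ V ^ 2 := by
    have := mul_self_le_mul_self (by positivity : (0:ℝ) ≤ δ * r ^ 3) hVlb
    linarith only [this]
  have hF3V : ‖a z₀‖ ^ 2 * (4 * r ^ 6) * V ≤ C ^ 2 * V * Q * V := by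
    have e1 : ‖a z₀‖ ^ 2 * V * (4 * r ^ 6) ≤ Q * (4 * r ^ 6) :=
      mul_le_mul_of_nonneg_right hA (by positivity)
    have e2 : (4:ℝ) ≤ C ^ 2 * δ ^ 2 := by
      have := mul_le_mul h5 h5 (by norm_num) (mul_nonneg hCpos.le hδ.le)
      linarith only [this]
    have e3 : 4 * (Q * r ^ 6) ≤ C ^ 2 * δ ^ 2 * (Q * r ^ 6) :=
      mul_le_mul_of_nonneg_right e2 (mul_nonneg hQ0 (by positivity))
    have e4 : C ^ 2 * Q * (δ ^ 2 * r ^ 6) ≤ C ^ 2 * Q * V ^ 2 :=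
      mul_le_mul_of_nonneg_left hV2 (by positivity)
    linarith only [e1, e3, e4]
  have hF3 : ‖a z₀‖ ^ 2 * (4 * r ^ 6) ≤ C ^ 2 * V * Q :=
    le_of_mul_le_mul_right (by linarith only [hF3V]) hVpos
  constructor
  · -- sup bound
    intro z hz
    set T := C * r⁻¹ ^ 3 * W * K with hT
    have hT0 : 0 ≤ T := by
      refine mul_nonneg (mul_nonneg (mul_nonneg hCpos.le (by positivity)) hW0) hK0
    have hTsq : (T / 2) ^ 2 = C ^ 2 * V * Q / (4 * r ^ 6) := by
      have hrne : (r : ℝ) ≠ 0 := hr.ne'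
      calc (T / 2) ^ 2 = C ^ 2 * (r⁻¹ ^ 3) ^ 2 * W ^ 2 * K ^ 2 / 4 := by rw [hT]; ring
        _ = C ^ 2 * (r⁻¹ ^ 3) ^ 2 * V * Q / 4 := by rw [hWV, hKsq]
        _ = C ^ 2 * V * Q / (4 * r ^ 6) := by ring
    have ht1 : ‖a z₀‖ ≤ T / 2 := by
      refine le_of_sq_le_sq _ _ (norm_nonneg _) (div_nonneg hT0 (by norm_num)) ?_
      rw [hTsq, le_div_iff₀ (by positivity : (0:ℝ) < 4 * r ^ 6)]
      linarith only [hF3]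
    have hzz : ‖z - z₀‖ ≤ 2 * r := by
      have h2 : ‖z - z₀‖ ≤ ‖z - x‖ + ‖x - z₀‖ := by
        have := norm_add_le (z - x) (x - z₀)
        simpa using this
      have h3 : ‖z - x‖ < r := mem_ball_iff_norm.mp hz
      have h4 : ‖x - z₀‖ < r := by
        have := mem_ball_iff_norm.mp hz₀ball
        rwa [← norm_neg, neg_sub] at this
      linarith
    have ht2 : frob G * ‖z - z₀‖ ≤ T / 2 := by
      refine le_of_sq_le_sq _ _ (mul_nonneg (frob_nonneg G) (norm_nonneg _))
        (div_nonneg hT0 (by norm_num)) ?_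
      rw [hTsq, le_div_iff₀ (by positivity : (0:ℝ) < 4 * r ^ 6)]
      have hfz : (frob G * ‖z - z₀‖) ^ 2 ≤ frob G ^ 2 * (4 * r ^ 2) := by
        have := pow_le_pow_left₀ (mul_nonneg (frob_nonneg G) (norm_nonneg _))
          (mul_le_mul_of_nonneg_left hzz (frob_nonneg G)) 2
        linarith only [this]
      linarith only [hF2, mul_le_mul_of_nonneg_right hfz
        (by positivity : (0:ℝ) ≤ 4 * r ^ 6)]
    calc ‖a z‖ = ‖(a z - a z₀) + a z₀‖ := by rw [sub_add_cancel]
      _ ≤ ‖a z - a z₀‖ + ‖a z₀‖ := norm_add_le _ _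
      _ ≤ frob G * ‖z - z₀‖ + ‖a z₀‖ := by linarith only [hlip' z]
      _ ≤ T / 2 + T / 2 := by linarith only [ht1, ht2]
      _ = T := by ring
  · -- frob bound
    set T := C * r⁻¹ ^ 4 * W * K with hT
    have hT0 : 0 ≤ T := by
      refine mul_nonneg (mul_nonneg (mul_nonneg hCpos.le (by positivity)) hW0) hK0
    have hTsq : T ^ 2 = C ^ 2 * V * Q / r ^ 8 := by
      have hrne : (r : ℝ) ≠ 0 := hr.ne'
      calc T ^ 2 = C ^ 2 * (r⁻¹ ^ 4) ^ 2 * W ^ 2 * K ^ 2 := by rw [hT]; ring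
        _ = C ^ 2 * (r⁻¹ ^ 4) ^ 2 * V * Q := by rw [hWV, hKsq]
        _ = C ^ 2 * V * Q / r ^ 8 := by ring
    refine le_of_sq_le_sq _ _ (frob_nonneg G) hT0 ?_
    rw [hTsq, le_div_iff₀ (by positivity : (0:ℝ) < r ^ 8)]
    linarith only [hF2, mul_nonneg (sq_nonneg (frob G)) (pow_nonneg hr.le 8)]
end
end
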